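/- Let E be a real Banach space, let t_F > 0, N ∈ ℕ with N ≥ 1, set τ := t_F/N and t^n := n·τ for 0 ≤ n ≤ N. Let ψ, ψ' : ℝ → E be such that ψ is Bochner integrable on [0, t_F], ψ' is Bochner integrable on [0, t_F] with t ↦ ‖ψ'(t)‖² integrable on [0, t_F], and for every 1 ≤ n ≤ N and every s ∈ [t^{n−1}, t^n] one has ψ(t^n) − ψ(s) = ∫_s^{t^n} ψ'(t) dt. For 1 ≤ n ≤ N set ψ̄^n := τ^{-1} ∫_{t^{n−1}}^{t^n} ψ(t) dt. Then ∑_{n=1}^N τ · ‖ψ(t^n) − ψ̄^n‖² ≤ τ² · ∫_0^{t_F} ‖ψ'(t)‖² dt. -/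

import Mathlib

open MeasureTheory intervalIntegral

lemma sq_intervalIntegral_norm_le {E : Type*} [NormedAddCommGroup E]
    {a b : ℝ} (hab : a ≤ b) {g : ℝ → E}
    (hg : IntervalIntegrable g volume a b)
    (hgsq : IntervalIntegrable (fun t => ‖g t‖ ^ 2) volume a b) :
    (∫ t in a..b, ‖g t‖) ^ 2 ≤ (b - a) * ∫ t in a..b, ‖g t‖ ^ 2 := by
  set μ := volume.restrict (Set.Ioc a b) with hμ
  have hB : (0:ℝ) ≤ b - a := sub_nonneg.mpr hab
  have hμuniv : (μ Set.univ).toReal = b - a := by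
    simp [hμ, Real.volume_Ioc, ENNReal.toReal_ofReal hB]
  have hfm : AEStronglyMeasurable (fun t => ‖g t‖) μ :=
    hg.1.aestronglyMeasurable.norm
  have hf2 : MemLp (fun t => ‖g t‖) 2 μ := by
    rw [memLp_two_iff_integrable_sq hfm]
    exact hgsq.1
  have hg1 : MemLp (fun _ : ℝ => (1:ℝ)) 2 μ := memLp_const 1
  have hpq : Real.HolderConjugate 2 2 := Real.HolderConjugate.two_two
  have h2 : ENNReal.ofReal (2:ℝ) = 2 := by norm_num
  have hH := integral_mul_le_Lp_mul_Lq_of_nonneg hpq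
      (Filter.Eventually.of_forall fun x => norm_nonneg (g x))
      (Filter.Eventually.of_forall fun _ => zero_le_one)
      (h2 ▸ hf2) (h2 ▸ hg1)
  simp only [mul_one] at hH
  have hrpow : ∀ x : ℝ, 0 ≤ x → x ^ (2:ℝ) = x ^ 2 := by
    intro x _
    rw [show (2:ℝ) = ((2:ℕ):ℝ) by norm_num, Real.rpow_natCast]
  have hconv : (fun x => ‖g x‖ ^ (2:ℝ)) = fun x => ‖g x‖ ^ 2 := by
    funext x; exact hrpow _ (norm_nonneg _)
  rw [hconv] at hH
  have hone : ∫ x : ℝ, (1:ℝ) ^ (2:ℝ) ∂μ = b - a := by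
    simp [Real.one_rpow, Measure.real, hμuniv]
  rw [hone] at hH
  set A := ∫ x, ‖g x‖ ^ 2 ∂μ with hA
  have hA0 : 0 ≤ A := integral_nonneg fun x => sq_nonneg _
  have hi0 : 0 ≤ ∫ x, ‖g x‖ ∂μ := integral_nonneg fun x => norm_nonneg _
  have hLeq : (∫ t in a..b, ‖g t‖) = ∫ x, ‖g x‖ ∂μ := by
    rw [intervalIntegral.integral_of_le hab]
  have hReq : (∫ t in a..b, ‖g t‖ ^ 2) = A := by
    rw [intervalIntegral.integral_of_le hab]
  rw [hLeq, hReq]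
  rw [← Real.sqrt_eq_rpow, ← Real.sqrt_eq_rpow] at hH
  nlinarith [Real.sq_sqrt hA0, Real.sq_sqrt hB, Real.sqrt_nonneg A,
    Real.sqrt_nonneg (b - a), mul_self_nonneg (Real.sqrt A * Real.sqrt (b - a))]

set_option maxHeartbeats 1000000 in
/-- Summed time-approximation estimate: on a uniform subdivision of `(0, t_F)` into `N`
subintervals of length `τ = t_F/N`, if on each subinterval `ψ(t^n) − ψ(s) = ∫_s^{t^n} ψ'`,
then `∑_{n=1}^N τ‖ψ(t^n) − ψ̄^n‖² ≤ τ² ∫_0^{t_F} ‖ψ'‖²`, where `ψ̄^n` is the time average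
of `ψ` over `(t^{n−1}, t^n)`. -/
theorem sum_endpoint_sub_average_sq_norm_le
    {E : Type*} [NormedAddCommGroup E] [NormedSpace ℝ E] [CompleteSpace E]
    (tF : ℝ) (htF : 0 < tF) (N : ℕ) (hN : 1 ≤ N) (ψ ψ' : ℝ → E)
    (hψ : IntervalIntegrable ψ volume 0 tF)
    (hψ' : IntervalIntegrable ψ' volume 0 tF)
    (hψ'sq : IntervalIntegrable (fun t => ‖ψ' t‖ ^ 2) volume 0 tF)
    (hftc : ∀ n : ℕ, 1 ≤ n → n ≤ N →
      ∀ s ∈ Set.Icc (((n : ℝ) - 1) * (tF / N)) ((n : ℝ) * (tF / N)),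
        ψ ((n : ℝ) * (tF / N)) - ψ s = ∫ t in s..((n : ℝ) * (tF / N)), ψ' t) :
    ∑ n ∈ Finset.Icc 1 N, (tF / N) *
        ‖ψ ((n : ℝ) * (tF / N)) -
          (tF / N)⁻¹ • ∫ t in (((n : ℝ) - 1) * (tF / N))..((n : ℝ) * (tF / N)), ψ t‖ ^ 2
      ≤ (tF / N) ^ 2 * ∫ t in (0 : ℝ)..tF, ‖ψ' t‖ ^ 2 := by
  have hNpos : (0:ℝ) < N := by
    exact_mod_cast Nat.lt_of_lt_of_le Nat.zero_lt_one hN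
  set τ := tF / N with hτdef
  have hτ : 0 < τ := div_pos htF hNpos
  have hNτ : (N:ℝ) * τ = tF := by
    rw [hτdef]; field_simp
  have hsubW : ∀ c d : ℝ, c ≤ d → 0 ≤ c → d ≤ tF → Set.uIcc c d ⊆ Set.uIcc 0 tF := by
    intro c d hcd hc hd
    rw [Set.uIcc_of_le hcd, Set.uIcc_of_le htF.le]
    exact Set.Icc_subset_Icc hc hd
  -- per-interval key estimate
  have key : ∀ n ∈ Finset.Icc 1 N,
      τ * ‖ψ ((n:ℝ) * τ) - τ⁻¹ • ∫ t in (((n:ℝ) - 1) * τ)..((n:ℝ) * τ), ψ t‖ ^ 2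
        ≤ τ ^ 2 * ∫ t in (((n:ℝ) - 1) * τ)..((n:ℝ) * τ), ‖ψ' t‖ ^ 2 := by
    intro n hn
    obtain ⟨hn1, hnN⟩ := Finset.mem_Icc.mp hn
    have h1n : (1:ℝ) ≤ (n:ℝ) := by exact_mod_cast hn1
    set a := ((n:ℝ) - 1) * τ with hadef
    set b := (n:ℝ) * τ with hbdef
    have ha0 : 0 ≤ a := mul_nonneg (by linarith) hτ.le
    have hab : a ≤ b := by
      have : (n:ℝ) - 1 ≤ (n:ℝ) := by linarith
      exact mul_le_mul_of_nonneg_right this hτ.le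
    have hbtF : b ≤ tF := by
      rw [← hNτ, hbdef]
      exact mul_le_mul_of_nonneg_right (by exact_mod_cast hnN) hτ.le
    have hsub : Set.uIcc a b ⊆ Set.uIcc 0 tF := hsubW a b hab ha0 hbtF
    have hψab : IntervalIntegrable ψ volume a b := hψ.mono_set hsub
    have hψ'ab : IntervalIntegrable ψ' volume a b := hψ'.mono_set hsub
    have hψ'sqab : IntervalIntegrable (fun t => ‖ψ' t‖ ^ 2) volume a b :=
      hψ'sq.mono_set hsub
    set C := ∫ t in a..b, ‖ψ' t‖ with hCdef
    have hC0 : 0 ≤ C :=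
      intervalIntegral.integral_nonneg hab (fun _ _ => norm_nonneg _)
    have hba : b - a = τ := by rw [hadef, hbdef]; ring
    -- pointwise bound on ψ b - ψ s
    have hpt : ∀ s ∈ Set.uIoc a b, ‖ψ b - ψ s‖ ≤ C := by
      intro s hs
      rw [Set.uIoc_of_le hab] at hs
      have hs' : s ∈ Set.Icc a b := ⟨hs.1.le, hs.2⟩
      rw [hftc n hn1 hnN s hs']
      calc ‖∫ t in s..b, ψ' t‖ ≤ ∫ t in s..b, ‖ψ' t‖ :=
            intervalIntegral.norm_integral_le_integral_norm hs.2
        _ ≤ C := by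
            refine intervalIntegral.integral_mono_interval hs.1.le hs.2 le_rfl
              (Filter.Eventually.of_forall fun x => norm_nonneg _) hψ'ab.norm
    -- rewrite the deviation as an integral
    have hid : ψ b - τ⁻¹ • ∫ t in a..b, ψ t
        = τ⁻¹ • ∫ s in a..b, (ψ b - ψ s) := by
      rw [intervalIntegral.integral_sub intervalIntegrable_const hψab,
        intervalIntegral.integral_const, hba, smul_sub, smul_smul,
        inv_mul_cancel₀ hτ.ne', one_smul]
    have hnormle : ‖ψ b - τ⁻¹ • ∫ t in a..b, ψ t‖ ≤ C := by
      rw [hid, norm_smul]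
      have h1 : ‖∫ s in a..b, (ψ b - ψ s)‖ ≤ C * |b - a| :=
        intervalIntegral.norm_integral_le_of_norm_le_const hpt
      rw [hba, abs_of_pos hτ] at h1
      calc ‖τ⁻¹‖ * ‖∫ s in a..b, (ψ b - ψ s)‖
          ≤ ‖τ⁻¹‖ * (C * τ) := by
            exact mul_le_mul_of_nonneg_left h1 (norm_nonneg _)
        _ = C := by
            rw [Real.norm_eq_abs, abs_of_pos (inv_pos.mpr hτ)]
            field_simp
    -- Cauchy–Schwarz
    have hCS : C ^ 2 ≤ τ * ∫ t in a..b, ‖ψ' t‖ ^ 2 := by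
      have h := sq_intervalIntegral_norm_le hab hψ'ab hψ'sqab
      rwa [hba] at h
    have hsq : ‖ψ b - τ⁻¹ • ∫ t in a..b, ψ t‖ ^ 2 ≤ C ^ 2 :=
      pow_le_pow_left₀ (norm_nonneg _) hnormle 2
    calc τ * ‖ψ b - τ⁻¹ • ∫ t in a..b, ψ t‖ ^ 2
        ≤ τ * C ^ 2 := mul_le_mul_of_nonneg_left hsq hτ.le
      _ ≤ τ * (τ * ∫ t in a..b, ‖ψ' t‖ ^ 2) := mul_le_mul_of_nonneg_left hCS hτ.le
      _ = τ ^ 2 * ∫ t in a..b, ‖ψ' t‖ ^ 2 := by ring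
  refine le_trans (Finset.sum_le_sum key) ?_
  rw [← Finset.mul_sum]
  apply le_of_eq
  congr 1
  -- sum over adjacent intervals
  have hint : ∀ k < N, IntervalIntegrable (fun t => ‖ψ' t‖ ^ 2) volume
      ((k:ℝ) * τ) (((k + 1 : ℕ):ℝ) * τ) := by
    intro k hk
    push_cast
    apply hψ'sq.mono_set
    apply hsubW
    · have : (k:ℝ) ≤ (k:ℝ) + 1 := by linarith
      exact mul_le_mul_of_nonneg_right this hτ.le
    · positivity
    · rw [← hNτ]
      have : (k:ℝ) + 1 ≤ (N:ℝ) := by exact_mod_cast hk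
      exact mul_le_mul_of_nonneg_right this hτ.le
  have hadj := intervalIntegral.sum_integral_adjacent_intervals
    (f := fun t => ‖ψ' t‖ ^ 2) (μ := volume) (a := fun k : ℕ => (k:ℝ) * τ) hint
  simp only [Nat.cast_zero, zero_mul] at hadj
  rw [hNτ] at hadj
  rw [← hadj]
  rw [← Finset.Ico_add_one_right_eq_Icc, Finset.sum_Ico_eq_sum_range]
  refine Finset.sum_congr rfl fun i _ => ?_
  congr 1
  · push_cast; ring
  · push_cast; ring
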